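/- arXiv:1907.02214 — 2 statements merged into one kernel-verified Lean document; each statement's English description precedes it below -/
import Mathlib

section
/- Let k ≥ 1 be an integer. Let T ⊂ ℝ² be a compact convex set with nonempty interior, contained in the closed upper half-plane {(x,y) : y ≥ 0}, whose boundary contains the segment e₀ = [0,1] × {0}. Let L : ℝ² → ℝ be a polynomial satisfying L ≥ 0 on T, L(x,0) > 0 for all x ∈ (0,1), and L > 0 on the interior of T. If Q₁ ∈ P_k(ℝ²) satisfies (i) ∫₀¹ L(x,0) Q₁(x,0) p(x) dx = 0 for every univariate polynomial p of degree at most k, and (ii) ∫_T L Q₁ p dA = 0 for every p ∈ P_{k−1}(ℝ²), then Q₁ = 0. -/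
open MeasureTheory Set

/-- A continuous function that is nonnegative on a measurable set with zero integral
vanishes on the interior of the set. -/
private lemma helper_int {X : Type*} [MeasurableSpace X] [TopologicalSpace X]
    [OpensMeasurableSpace X]
    (μ : Measure X) [μ.IsOpenPosMeasure] {f : X → ℝ} (hf : Continuous f)
    {s : Set X} (hs : MeasurableSet s) (hnonneg : ∀ x ∈ s, 0 ≤ f x)
    (hint : IntegrableOn f s μ) (hzero : ∫ x in s, f x ∂μ = 0)
    {x₀ : X} (hx₀ : x₀ ∈ interior s) : f x₀ = 0 := by
  by_contra hne
  have hfae : 0 ≤ᵐ[μ.restrict s] f := (ae_restrict_iff' hs).2 (.of_forall hnonneg)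
  have hpos : 0 < f x₀ := lt_of_le_of_ne (hnonneg x₀ (interior_subset hx₀)) (Ne.symm hne)
  have h1 : ¬ (0 < ∫ x in s, f x ∂μ) := by rw [hzero]; exact lt_irrefl 0
  rw [setIntegral_pos_iff_support_of_nonneg_ae hfae hint] at h1
  apply h1
  have hopen : IsOpen (f ⁻¹' Ioi 0 ∩ interior s) := (isOpen_Ioi.preimage hf).inter isOpen_interior
  have hne' : (f ⁻¹' Ioi 0 ∩ interior s).Nonempty := ⟨x₀, hpos, hx₀⟩
  calc (0 : ENNReal) < μ (f ⁻¹' Ioi 0 ∩ interior s) := hopen.measure_pos μ hne'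
    _ ≤ μ (Function.support f ∩ s) :=
        measure_mono (inter_subset_inter (fun x hx => ne_of_gt hx) interior_subset)

private lemma natdeg_helper (Q : MvPolynomial (Fin 2) ℝ) :
    (MvPolynomial.eval₂ Polynomial.C ![Polynomial.X, 0] Q).natDegree ≤ Q.totalDegree := by
  rw [MvPolynomial.eval₂_eq']
  apply Polynomial.natDegree_sum_le_of_forall_le
  intro d hd
  have hsum : d 0 + d 1 ≤ Q.totalDegree := by
    have h := MvPolynomial.le_totalDegree hd
    have h2 : (d.sum fun _ e => e) = d 0 + d 1 := by
      rw [Finsupp.sum_fintype _ _ (fun _ => rfl), Fin.sum_univ_two]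
    omega
  rw [Fin.prod_univ_two]
  simp only [Matrix.cons_val_zero, Matrix.cons_val_one, Matrix.head_cons]
  by_cases h1 : d 1 = 0
  · simp only [h1, pow_zero, mul_one]
    refine le_trans (Polynomial.natDegree_C_mul_le _ _) ?_
    simpa using le_trans (le_of_eq (Polynomial.natDegree_X_pow (R := ℝ) (d 0))) (by omega)
  · rw [zero_pow h1, mul_zero, mul_zero]
    simp

private lemma mv_eq_zero_of_eqOn_open {R : MvPolynomial (Fin 2) ℝ}
    {U : Set (EuclideanSpace ℝ (Fin 2))}
    (hU : IsOpen U) (hne : U.Nonempty) (h : ∀ z ∈ U, MvPolynomial.eval z R = 0) : R = 0 := by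
  obtain ⟨x₀, hx₀⟩ := hne
  set f : EuclideanSpace ℝ (Fin 2) →L[ℝ] (Fin 2 → ℝ) :=
    (EuclideanSpace.equiv (Fin 2) ℝ).toContinuousLinearMap with hf
  have hA : AnalyticOnNhd ℝ (fun z => MvPolynomial.eval (f z) R) univ :=
    AnalyticOnNhd.eval_continuousLinearMap f R
  have hev : (fun z => MvPolynomial.eval (f z) R) =ᶠ[nhds x₀] 0 := by
    filter_upwards [hU.mem_nhds hx₀] with z hz
    exact h z hz
  have hEq := hA.eqOn_zero_of_preconnected_of_eventuallyEq_zero isPreconnected_univ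
    (mem_univ x₀) hev
  apply MvPolynomial.funext
  intro x
  have := hEq (mem_univ ((EuclideanSpace.equiv (Fin 2) ℝ).symm x))
  exact this

theorem stmt_2 (k : ℕ) (hk : 1 ≤ k)
    (T : Set (EuclideanSpace ℝ (Fin 2)))
    (hTcompact : IsCompact T) (hTconvex : Convex ℝ T) (hTint : (interior T).Nonempty)
    (hTupper : ∀ x ∈ T, (0:ℝ) ≤ x 1)
    (hTe₀ : ∀ x ∈ Icc (0:ℝ) 1, (WithLp.toLp 2 ![x, 0] : EuclideanSpace ℝ (Fin 2)) ∈ frontier T)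
    (L : MvPolynomial (Fin 2) ℝ)
    (hLnonneg : ∀ x ∈ T, 0 ≤ MvPolynomial.eval x L)
    (hLe₀pos : ∀ x ∈ Ioo (0:ℝ) 1, 0 < MvPolynomial.eval ![x, 0] L)
    (hLintpos : ∀ x ∈ interior T, 0 < MvPolynomial.eval x L)
    (Q₁ : MvPolynomial (Fin 2) ℝ) (hQ₁deg : Q₁.totalDegree ≤ k)
    (hi : ∀ p : Polynomial ℝ, p.natDegree ≤ k →
      ∫ x in Icc (0:ℝ) 1,
        MvPolynomial.eval ![x, 0] L * MvPolynomial.eval ![x, 0] Q₁ * p.eval x = 0)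
    (hii : ∀ p : MvPolynomial (Fin 2) ℝ, p.totalDegree ≤ k - 1 →
      ∫ z in T,
        MvPolynomial.eval z L * MvPolynomial.eval z Q₁ * MvPolynomial.eval z p = 0) :
    Q₁ = 0 := by
  classical
  have hTclosed : IsClosed T := hTcompact.isClosed
  have hfront : frontier T ⊆ T := hTclosed.frontier_subset
  -- the continuous embedding x ↦ (x, 0)
  have hc : Continuous fun x : ℝ => (![x, 0] : Fin 2 → ℝ) := by
    refine continuous_pi fun i => ?_
    fin_cases i
    · exact continuous_id
    · simpa using continuous_const
  -- Step 1: the univariate polynomial q(x) = Q₁(x,0)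
  set q : Polynomial ℝ := MvPolynomial.eval₂ Polynomial.C ![Polynomial.X, 0] Q₁ with hq
  have heq : ∀ x : ℝ, q.eval x = MvPolynomial.eval ![x, 0] Q₁ := by
    intro x
    rw [hq, MvPolynomial.polynomial_eval_eval₂]
    have h1 : (Polynomial.evalRingHom x).comp Polynomial.C = RingHom.id ℝ := by
      ext r; simp
    have h2 : (fun s => Polynomial.eval x (![Polynomial.X, 0] s)) = ![x, 0] := by
      funext i; fin_cases i <;> simp
    rw [h1, h2, MvPolynomial.eval₂_id]
  have hqdeg : q.natDegree ≤ k := le_trans (natdeg_helper Q₁) hQ₁deg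
  -- Step 2: q = 0
  have hL0 : ∀ x ∈ Icc (0:ℝ) 1, 0 ≤ MvPolynomial.eval ![x, 0] L := fun x hx =>
    hLnonneg (WithLp.toLp 2 ![x, 0]) (hfront (hTe₀ x hx))
  have hcont1 : Continuous fun x : ℝ =>
      MvPolynomial.eval ![x, 0] L * MvPolynomial.eval ![x, 0] Q₁ * q.eval x := by
    exact (((MvPolynomial.continuous_eval L).comp hc).mul
      ((MvPolynomial.continuous_eval Q₁).comp hc)).mul q.continuous
  have hzero1 : ∀ x ∈ Ioo (0:ℝ) 1,
      MvPolynomial.eval ![x, 0] L * MvPolynomial.eval ![x, 0] Q₁ * q.eval x = 0 := by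
    intro x hx
    refine helper_int volume hcont1 measurableSet_Icc ?_ ?_ (hi q hqdeg) ?_
    · intro y hy
      rw [← heq y]
      have : MvPolynomial.eval ![y, 0] L * q.eval y * q.eval y
          = MvPolynomial.eval ![y, 0] L * (q.eval y) ^ 2 := by ring
      rw [this]
      exact mul_nonneg (hL0 y hy) (sq_nonneg _)
    · exact hcont1.continuousOn.integrableOn_compact isCompact_Icc
    · rwa [interior_Icc]
  have hqzero : q = 0 := by
    apply Polynomial.eq_zero_of_infinite_isRoot
    apply Set.Infinite.mono (s := Ioo (0:ℝ) 1)
    · intro x hx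
      have h := hzero1 x hx
      have hL := hLe₀pos x hx
      rw [← heq x] at h
      have : q.eval x * q.eval x = 0 := by
        rcases mul_eq_zero.1 h with h' | h'
        · rcases mul_eq_zero.1 h' with h'' | h''
          · exact absurd h'' (ne_of_gt hL)
          · rw [h'', zero_mul]
        · rw [h', mul_zero]
      exact mul_self_eq_zero.1 this
    · exact Set.Ioo_infinite (by norm_num)
  have hQ₁e₀ : ∀ x : ℝ, MvPolynomial.eval ![x, 0] Q₁ = 0 := by
    intro x; rw [← heq x, hqzero]; simp
  -- Step 3: Q₁ = X 1 * R
  set e : Equiv.Perm (Fin 2) := Equiv.swap 0 1 with he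
  set P : Polynomial (MvPolynomial (Fin 1) ℝ) :=
    MvPolynomial.finSuccEquiv ℝ 1 (MvPolynomial.rename e Q₁) with hP
  have hcoeff0 : P.coeff 0 = 0 := by
    apply MvPolynomial.funext
    intro s
    have h1 := MvPolynomial.eval_eq_eval_mv_eval' s (0:ℝ) (MvPolynomial.rename e Q₁)
    rw [MvPolynomial.eval_rename] at h1
    have h2 : ((Fin.cons (0:ℝ) s) ∘ e) = ![s 0, 0] := by
      funext i
      fin_cases i <;> simp [he, Equiv.swap_apply_def]
    rw [h2, hQ₁e₀ (s 0)] at h1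
    have h3 : Polynomial.eval 0 (Polynomial.map (MvPolynomial.eval s) P)
        = MvPolynomial.eval s (P.coeff 0) := by
      rw [← Polynomial.coeff_zero_eq_eval_zero, Polynomial.coeff_map]
    rw [map_zero, ← h3, ← h1]
  obtain ⟨P', hP'⟩ := Polynomial.X_dvd_iff.2 hcoeff0
  set R : MvPolynomial (Fin 2) ℝ :=
    MvPolynomial.rename e ((MvPolynomial.finSuccEquiv ℝ 1).symm P') with hR
  have hQR : Q₁ = MvPolynomial.X 1 * R := by
    have h1 : MvPolynomial.rename e Q₁
        = MvPolynomial.X 0 * (MvPolynomial.finSuccEquiv ℝ 1).symm P' := by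
      have := congrArg (MvPolynomial.finSuccEquiv ℝ 1).symm hP'
      rw [AlgEquiv.symm_apply_apply] at this
      rw [this, map_mul]
      congr 1
      rw [show (Polynomial.X : Polynomial (MvPolynomial (Fin 1) ℝ))
          = MvPolynomial.finSuccEquiv ℝ 1 (MvPolynomial.X 0) from
          (MvPolynomial.finSuccEquiv_X_zero ..).symm,
        AlgEquiv.symm_apply_apply]
    have h2 : MvPolynomial.rename e (MvPolynomial.rename e Q₁) = Q₁ := by
      rw [MvPolynomial.rename_rename]
      have : (⇑e ∘ ⇑e) = id := by funext i; simp [he]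
      rw [this, MvPolynomial.rename_id, AlgHom.id_apply]
    rw [← h2, h1, map_mul, MvPolynomial.rename_X, hR]
    simp [he]
  have hevalQR : ∀ z : EuclideanSpace ℝ (Fin 2),
      MvPolynomial.eval z Q₁ = z 1 * MvPolynomial.eval z R := by
    intro z; rw [hQR]; simp
  -- degree bound for R
  have hRdeg : R.totalDegree ≤ k - 1 := by
    by_cases hR0 : R = 0
    · simp [hR0]
    · obtain ⟨m, hm, hmax⟩ := Finset.exists_mem_eq_sup R.support
        (MvPolynomial.support_nonempty.2 hR0) (fun s => s.sum fun _ n => n)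
      have hmem : Finsupp.single 1 1 + m ∈ Q₁.support := by
        rw [MvPolynomial.mem_support_iff, hQR, MvPolynomial.coeff_X_mul]
        exact MvPolynomial.mem_support_iff.1 hm
      have hle := MvPolynomial.le_totalDegree hmem
      have hsum : ((Finsupp.single (1 : Fin 2) 1 + m).sum fun _ n => n)
          = 1 + (m.sum fun _ n => n) := by
        rw [Finsupp.sum_add_index (by simp) (by simp), Finsupp.sum_single_index rfl]
      have htd : R.totalDegree = m.sum fun _ n => n := hmax
      omega
  -- Step 4: R vanishes on the interior of T
  have hy_pos : ∀ x ∈ interior T, 0 < x 1 := by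
    intro x hx
    rcases lt_or_eq_of_le (hTupper x (interior_subset hx)) with h | h
    · exact h
    · exfalso
      obtain ⟨ε, hε, hball⟩ := Metric.isOpen_iff.1 isOpen_interior x hx
      set y : EuclideanSpace ℝ (Fin 2) := x - (ε/2) • EuclideanSpace.single 1 1 with hy
      have hyball : y ∈ Metric.ball x ε := by
        rw [Metric.mem_ball, dist_eq_norm, hy]
        have : x - (ε/2) • EuclideanSpace.single 1 1 - x
            = -((ε/2) • EuclideanSpace.single (1 : Fin 2) (1:ℝ)) := by abel
        rw [this, norm_neg, norm_smul, EuclideanSpace.norm_single]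
        simp only [norm_one, mul_one, Real.norm_eq_abs]
        rw [abs_of_pos (by linarith)]
        linarith
      have hyT : y ∈ T := interior_subset (hball hyball)
      have := hTupper y hyT
      rw [hy] at this
      simp only [PiLp.sub_apply, PiLp.smul_apply, EuclideanSpace.single_apply,
        if_pos rfl, smul_eq_mul, mul_one] at this
      rw [← h] at this
      norm_num at this
      linarith
  have hcont2 : Continuous fun z : EuclideanSpace ℝ (Fin 2) =>
      MvPolynomial.eval z L * MvPolynomial.eval z Q₁ * MvPolynomial.eval z R := by
    exact (((MvPolynomial.continuous_eval L).comp (PiLp.continuous_ofLp (p := 2) (β := fun _ : Fin 2 => ℝ))).mul ((MvPolynomial.continuous_eval Q₁).comp (PiLp.continuous_ofLp (p := 2) (β := fun _ : Fin 2 => ℝ)))).mul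
      ((MvPolynomial.continuous_eval R).comp (PiLp.continuous_ofLp (p := 2) (β := fun _ : Fin 2 => ℝ)))
  have hRint : ∀ z ∈ interior T, MvPolynomial.eval z R = 0 := by
    intro z hz
    have hzero2 : MvPolynomial.eval z L * MvPolynomial.eval z Q₁ * MvPolynomial.eval z R = 0 := by
      refine helper_int volume hcont2 hTclosed.measurableSet ?_ ?_ (hii R hRdeg) hz
      · intro w hw
        rw [hevalQR w]
        have : MvPolynomial.eval w L * (w 1 * MvPolynomial.eval w R) * MvPolynomial.eval w R
            = (MvPolynomial.eval w L * w 1) * (MvPolynomial.eval w R) ^ 2 := by ring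
        rw [this]
        exact mul_nonneg (mul_nonneg (hLnonneg w hw) (hTupper w hw)) (sq_nonneg _)
      · exact hcont2.continuousOn.integrableOn_compact hTcompact
    rw [hevalQR z] at hzero2
    have hL := hLintpos z hz
    have hy := hy_pos z hz
    have h2 : (MvPolynomial.eval z L * z 1) * (MvPolynomial.eval z R) ^ 2 = 0 := by
      rw [← hzero2]; ring
    rcases mul_eq_zero.1 h2 with h' | h'
    · exact absurd h' (ne_of_gt (mul_pos hL hy))
    · exact pow_eq_zero_iff (by norm_num) |>.1 h'
  -- Step 5: conclude
  have hRzero : R = 0 := mv_eq_zero_of_eqOn_open isOpen_interior hTint hRint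
  rw [hQR, hRzero, mul_zero]
end

section
/- Let k ≥ 1 be an integer. Let T ⊂ ℝ² be a compact convex set with nonempty interior, contained in the closed upper half-plane {(x,y) : y ≥ 0}, whose boundary contains the segment e₀ = [0,1] × {0}. Let L : ℝ² → ℝ be a polynomial satisfying L ≥ 0 on T, L(x,0) > 0 for all x ∈ (0,1), and L > 0 on the interior of T. Then for every univariate polynomial g of degree at most k there exists a unique Q₁ ∈ P_k(ℝ²) such that (i) ∫₀¹ (g(x) − L(x,0) Q₁(x,0)) p(x) dx = 0 for every univariate polynomial p of degree at most k, and (ii) ∫_T L Q₁ p dA = 0 for every p ∈ P_{k−1}(ℝ²). -/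
open MeasureTheory Set

section Aux

lemma aux_exists_unique_dual {V : Type*} [AddCommGroup V] [Module ℝ V] [FiniteDimensional ℝ V]
    (B : V →ₗ[ℝ] Module.Dual ℝ V) (hB : ∀ v, B v v = 0 → v = 0)
    (φ : Module.Dual ℝ V) : ∃! v, B v = φ := by
  have hinj : Function.Injective B := by
    rw [← LinearMap.ker_eq_bot]
    refine (Submodule.eq_bot_iff _).2 fun v hv => hB v ?_
    rw [LinearMap.mem_ker] at hv
    simp [hv]
  have hsurj : Function.Surjective B :=
    (LinearMap.injective_iff_surjective_of_finrank_eq_finrank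
      (Subspace.dual_finrank_eq (K := ℝ) (V := V)).symm).mp hinj
  obtain ⟨v, hv⟩ := hsurj φ
  exact ⟨v, hv, fun w hw => hinj (hw.trans hv.symm)⟩

lemma aux_solve {V : Type*} [AddCommGroup V] [Module ℝ V] [FiniteDimensional ℝ V]
    (f : V → V → ℝ) (φ : V → ℝ)
    (hadd1 : ∀ v₁ v₂ w, f (v₁ + v₂) w = f v₁ w + f v₂ w)
    (hsmul1 : ∀ (c : ℝ) v w, f (c • v) w = c * f v w)
    (hadd2 : ∀ v w₁ w₂, f v (w₁ + w₂) = f v w₁ + f v w₂)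
    (hsmul2 : ∀ (c : ℝ) v w, f v (c • w) = c * f v w)
    (hφadd : ∀ w₁ w₂, φ (w₁ + w₂) = φ w₁ + φ w₂)
    (hφsmul : ∀ (c : ℝ) w, φ (c • w) = c * φ w)
    (hdef : ∀ v, f v v = 0 → v = 0) :
    ∃! v, ∀ w, f v w = φ w := by
  obtain ⟨v, hv, hu⟩ := aux_exists_unique_dual
    (LinearMap.mk₂ ℝ f hadd1 (fun c v w => by rw [hsmul1]; rfl) hadd2
      (fun c v w => by rw [hsmul2]; rfl))
    (fun v h => hdef v (by simpa using h))
    { toFun := φ, map_add' := hφadd,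
      map_smul' := fun c w => by simpa using hφsmul c w }
  refine ⟨v, fun w => by simpa using DFunLike.congr_fun hv w, fun v' hv' => hu v' ?_⟩
  ext w
  simpa using hv' w

lemma aux_vanish {X : Type*} [MeasurableSpace X] [TopologicalSpace X]
    [OpensMeasurableSpace X] {μ : Measure X} [μ.IsOpenPosMeasure]
    {S : Set X} (hS : MeasurableSet S) (hμS : μ S ≠ ⊤) {f : X → ℝ}
    (hf : Continuous f) (hfi : IntegrableOn f S μ)
    (hnn : ∀ x ∈ S, 0 ≤ f x) (hz : ∫ x in S, f x ∂μ = 0)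
    {a : X} (ha : a ∈ interior S) : f a = 0 := by
  by_contra hfa
  have haS : a ∈ S := interior_subset ha
  have hfapos : 0 < f a := lt_of_le_of_ne (hnn a haS) (Ne.symm hfa)
  set U : Set X := interior S ∩ f ⁻¹' (Ioi (f a / 2)) with hUdef
  have hUopen : IsOpen U := isOpen_interior.inter (isOpen_Ioi.preimage hf)
  have haU : a ∈ U := ⟨ha, by simp only [mem_preimage, mem_Ioi]; linarith⟩
  have hμU : 0 < μ U := hUopen.measure_pos μ ⟨a, haU⟩
  have hUS : U ⊆ S := fun x hx => interior_subset hx.1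
  have hμU' : μ U ≠ ⊤ := ne_top_of_le_ne_top hμS (measure_mono hUS)
  have h1 : f a / 2 * (μ U).toReal ≤ ∫ x in U, f x ∂μ :=
    setIntegral_ge_of_const_le_real hUopen.measurableSet hμU'
      (fun x hx => le_of_lt hx.2) (hfi.mono_set hUS)
  have h2 : ∫ x in U, f x ∂μ ≤ ∫ x in S, f x ∂μ :=
    setIntegral_mono_set hfi (ae_restrict_of_forall_mem hS hnn) hUS.eventuallyLE
  have h3 : 0 < f a / 2 * (μ U).toReal :=
    mul_pos (by linarith) (ENNReal.toReal_pos hμU.ne' hμU')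
  linarith

lemma aux_mv_eq_zero (R : MvPolynomial (Fin 2) ℝ) {U : Set (EuclideanSpace ℝ (Fin 2))}
    (hUo : IsOpen U) (hUne : U.Nonempty)
    (hz : ∀ z ∈ U, MvPolynomial.eval z R = 0) : R = 0 := by
  obtain ⟨a, ha⟩ := hUne
  have hA : AnalyticOnNhd ℝ (fun z : EuclideanSpace ℝ (Fin 2) => MvPolynomial.eval z R)
      Set.univ := by
    have := AnalyticOnNhd.eval_continuousLinearMap
      ((EuclideanSpace.equiv (Fin 2) ℝ).toContinuousLinearMap) R
    exact this
  have heq : EqOn (fun z : EuclideanSpace ℝ (Fin 2) => MvPolynomial.eval z R) 0 Set.univ := by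
    refine hA.eqOn_zero_of_preconnected_of_eventuallyEq_zero isPreconnected_univ (mem_univ a) ?_
    filter_upwards [hUo.mem_nhds ha] with z hzU
    exact hz z hzU
  refine MvPolynomial.funext fun x => ?_
  have hx := heq (mem_univ ((EuclideanSpace.equiv (Fin 2) ℝ).symm x))
  simpa using hx

open MvPolynomial in
lemma aux_X1_dvd (Q : MvPolynomial (Fin 2) ℝ) :
    (X 1 : MvPolynomial (Fin 2) ℝ) ∣ Q - aeval ![X 0, 0] Q := by
  induction Q using MvPolynomial.induction_on with
  | C a => simp
  | add p q hp hq =>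
      have : p + q - aeval ![X 0, 0] (p + q) =
          (p - aeval ![X 0, 0] p) + (q - aeval ![X 0, 0] q) := by
        rw [map_add]; ring
      rw [this]; exact dvd_add hp hq
  | mul_X p i hp =>
      fin_cases i
      · show (X 1 : MvPolynomial (Fin 2) ℝ) ∣ p * X 0 - aeval ![X 0, 0] (p * X 0)
        have : p * X 0 - aeval ![X 0, 0] (p * X 0) =
            (p - aeval ![X 0, 0] p) * X 0 := by
          rw [map_mul, aeval_X]; simp; ring
        rw [this]; exact hp.mul_right _
      · show (X 1 : MvPolynomial (Fin 2) ℝ) ∣ p * X 1 - aeval ![X 0, 0] (p * X 1)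
        have : p * X 1 - aeval ![X 0, 0] (p * X 1) = p * X 1 := by
          rw [map_mul, aeval_X]; simp
        rw [this]; exact Dvd.intro_left p rfl

open MvPolynomial in
lemma aux_td_shift {R : MvPolynomial (Fin 2) ℝ} {n : ℕ}
    (h : (X 1 * R).totalDegree ≤ n) : R.totalDegree ≤ n - 1 := by
  show R.support.sup (fun s => s.sum fun _ e => e) ≤ n - 1
  refine Finset.sup_le fun d hd => ?_
  have hmem : (Finsupp.single 1 1 + d) ∈ (X 1 * R).support := by
    rw [MvPolynomial.mem_support_iff, MvPolynomial.coeff_X_mul]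
    exact MvPolynomial.mem_support_iff.mp hd
  have hle := MvPolynomial.le_totalDegree hmem
  have hsum : ((Finsupp.single 1 1 + d).sum fun _ e => e) =
      1 + (d.sum fun _ e => e) := by
    rw [Finsupp.sum_add_index' (fun _ => rfl) (fun _ _ _ => rfl),
      Finsupp.sum_single_index rfl]
  omega

open MvPolynomial in
lemma aux_eval_lift (q : Polynomial ℝ) (z : Fin 2 → ℝ) :
    MvPolynomial.eval z (Polynomial.aeval (X 0 : MvPolynomial (Fin 2) ℝ) q) = q.eval (z 0) := by
  have := Polynomial.aeval_algHom_apply (MvPolynomial.aeval z (R := ℝ))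
    (X 0 : MvPolynomial (Fin 2) ℝ) q
  simp only [aeval_X] at this
  have hae : (MvPolynomial.aeval z) ((Polynomial.aeval (X 0 : MvPolynomial (Fin 2) ℝ)) q)
      = (MvPolynomial.eval z) ((Polynomial.aeval (X 0 : MvPolynomial (Fin 2) ℝ)) q) := by
    rw [← MvPolynomial.coe_aeval_eq_eval]; rfl
  rw [hae] at this
  rw [← this, ← Polynomial.coe_aeval_eq_eval]

open MvPolynomial in
lemma aux_td_lift (q : Polynomial ℝ) :
    (Polynomial.aeval (X 0 : MvPolynomial (Fin 2) ℝ) q).totalDegree ≤ q.natDegree := by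
  rw [Polynomial.aeval_eq_sum_range]
  refine (MvPolynomial.totalDegree_finset_sum _ _).trans ?_
  refine Finset.sup_le fun i hi => ?_
  refine (MvPolynomial.totalDegree_smul_le _ _).trans ?_
  rw [MvPolynomial.totalDegree_X_pow]
  exact Nat.lt_succ_iff.mp (Finset.mem_range.mp hi)

open MvPolynomial in
lemma aux_eval_tr (Q : MvPolynomial (Fin 2) ℝ) (x : ℝ) :
    (MvPolynomial.aeval ![Polynomial.X, (0 : Polynomial ℝ)] Q).eval x
      = MvPolynomial.eval ![x, 0] Q := by
  have h := congrFun (congrArg DFunLike.coe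
    (MvPolynomial.comp_aeval (f := ![Polynomial.X, (0 : Polynomial ℝ)])
      (Polynomial.aeval x : Polynomial ℝ →ₐ[ℝ] ℝ))) Q
  simp only [AlgHom.comp_apply] at h
  have h2 : (fun i => (Polynomial.aeval x : Polynomial ℝ →ₐ[ℝ] ℝ)
      (![Polynomial.X, (0 : Polynomial ℝ)] i)) = ![x, 0] := by
    funext i
    fin_cases i <;> simp
  rw [h2] at h
  rw [← Polynomial.coe_aeval_eq_eval, ← MvPolynomial.coe_aeval_eq_eval]
  exact h

open MvPolynomial in
lemma aux_lift_tr (Q : MvPolynomial (Fin 2) ℝ) :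
    Polynomial.aeval (MvPolynomial.X 0 : MvPolynomial (Fin 2) ℝ)
        (MvPolynomial.aeval ![Polynomial.X, (0 : Polynomial ℝ)] Q)
      = MvPolynomial.aeval ![MvPolynomial.X 0, 0] Q := by
  have h := congrFun (congrArg DFunLike.coe
    (MvPolynomial.comp_aeval (f := ![Polynomial.X, (0 : Polynomial ℝ)])
      (Polynomial.aeval (MvPolynomial.X 0 : MvPolynomial (Fin 2) ℝ) :
        Polynomial ℝ →ₐ[ℝ] MvPolynomial (Fin 2) ℝ))) Q
  simp only [AlgHom.comp_apply] at h
  have h2 : (fun i => (Polynomial.aeval (MvPolynomial.X 0 : MvPolynomial (Fin 2) ℝ) :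
      Polynomial ℝ →ₐ[ℝ] MvPolynomial (Fin 2) ℝ) (![Polynomial.X, (0 : Polynomial ℝ)] i))
      = ![MvPolynomial.X 0, 0] := by
    funext i
    fin_cases i <;> simp
  rw [h2] at h
  exact h

open MvPolynomial in
lemma aux_natDegree_tr (Q : MvPolynomial (Fin 2) ℝ) :
    (MvPolynomial.aeval ![Polynomial.X, (0 : Polynomial ℝ)] Q).natDegree ≤ Q.totalDegree := by
  conv_lhs => rw [Q.as_sum]
  rw [map_sum]
  refine Polynomial.natDegree_sum_le_of_forall_le _ _ fun d hd => ?_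
  rw [MvPolynomial.aeval_monomial]
  refine Polynomial.natDegree_mul_le.trans ?_
  have h1 : (algebraMap ℝ (Polynomial ℝ) (MvPolynomial.coeff d Q)).natDegree = 0 :=
    Polynomial.natDegree_C _
  rw [h1, zero_add]
  refine (Polynomial.natDegree_prod_le _ _).trans ?_
  refine le_trans (Finset.sum_le_sum (g := fun i => d i) fun i _ => ?_) ?_
  · fin_cases i
    · simp
    · refine Polynomial.natDegree_pow_le.trans ?_
      simp
  · exact MvPolynomial.le_totalDegree hd

end Aux

set_option maxHeartbeats 1000000 in
theorem stmt_3 (k : ℕ) (hk : 1 ≤ k)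
    (T : Set (EuclideanSpace ℝ (Fin 2)))
    (hTcompact : IsCompact T) (hTconvex : Convex ℝ T) (hTint : (interior T).Nonempty)
    (hTupper : ∀ x ∈ T, (0:ℝ) ≤ x 1)
    (hTe₀ : ∀ x ∈ Icc (0:ℝ) 1, (WithLp.toLp 2 ![x, 0] : EuclideanSpace ℝ (Fin 2)) ∈ frontier T)
    (L : MvPolynomial (Fin 2) ℝ)
    (hLnonneg : ∀ x ∈ T, 0 ≤ MvPolynomial.eval x L)
    (hLe₀pos : ∀ x ∈ Ioo (0:ℝ) 1, 0 < MvPolynomial.eval ![x, 0] L)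
    (hLintpos : ∀ x ∈ interior T, 0 < MvPolynomial.eval x L)
    (g : Polynomial ℝ) (hg : g.natDegree ≤ k) :
    ∃! Q₁ : MvPolynomial (Fin 2) ℝ, Q₁.totalDegree ≤ k ∧
      (∀ p : Polynomial ℝ, p.natDegree ≤ k →
        ∫ x in Icc (0:ℝ) 1,
          (g.eval x - MvPolynomial.eval ![x, 0] L * MvPolynomial.eval ![x, 0] Q₁) * p.eval x
            = 0) ∧
      (∀ p : MvPolynomial (Fin 2) ℝ, p.totalDegree ≤ k - 1 →
        ∫ z in T,
          MvPolynomial.eval z L * MvPolynomial.eval z Q₁ * MvPolynomial.eval z p = 0) := by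
  classical
  -- basic topology / measure facts
  have hTclosed : IsClosed T := hTcompact.isClosed
  have hTmeas : MeasurableSet T := hTclosed.measurableSet
  have hTfin : volume T ≠ ⊤ := hTcompact.measure_lt_top.ne
  have he₀T : ∀ x ∈ Icc (0:ℝ) 1, (WithLp.toLp 2 ![x, 0] : EuclideanSpace ℝ (Fin 2)) ∈ T := fun x hx =>
    hTclosed.frontier_subset (hTe₀ x hx)
  -- continuity facts
  have hcont : ∀ P : MvPolynomial (Fin 2) ℝ,
      Continuous fun z : EuclideanSpace ℝ (Fin 2) => MvPolynomial.eval z P := fun P =>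
    (MvPolynomial.continuous_eval P).comp (EuclideanSpace.equiv (Fin 2) ℝ).continuous
  have hm : Continuous fun x : ℝ => (![x, (0:ℝ)] : Fin 2 → ℝ) := by
    refine continuous_pi fun i => ?_
    fin_cases i
    · simpa using continuous_id'
    · simpa using continuous_const
  have hwcont : ∀ P : MvPolynomial (Fin 2) ℝ,
      Continuous fun x : ℝ => MvPolynomial.eval ![x, (0:ℝ)] P := fun P =>
    (MvPolynomial.continuous_eval P).comp hm
  -- integrability facts
  have hint1 : ∀ f : ℝ → ℝ, Continuous f → IntegrableOn f (Icc (0:ℝ) 1) volume :=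
    fun f hf => hf.integrableOn_Icc
  have hTig : ∀ f : EuclideanSpace ℝ (Fin 2) → ℝ, Continuous f → IntegrableOn f T volume :=
    fun f hf => hf.continuousOn.integrableOn_compact hTcompact
  -- nonnegativity of L on the bottom edge
  have hwnn : ∀ x ∈ Icc (0:ℝ) 1, 0 ≤ MvPolynomial.eval ![x, (0:ℝ)] L := fun x hx =>
    hLnonneg _ (he₀T x hx)
  -- positivity of the second coordinate on the interior
  have hy_pos : ∀ z ∈ interior T, 0 < z 1 := by
    intro z hz
    obtain ⟨ε, hε, hball⟩ := Metric.isOpen_iff.mp isOpen_interior z hz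
    set z' : EuclideanSpace ℝ (Fin 2) := z - (ε/2) • EuclideanSpace.single 1 (1:ℝ) with hz'def
    have hz'mem : z' ∈ T := by
      refine interior_subset (hball ?_)
      rw [Metric.mem_ball, dist_eq_norm]
      have h1 : z' - z = -((ε/2) • EuclideanSpace.single 1 (1:ℝ)) := by
        rw [hz'def]; abel
      rw [h1, norm_neg, norm_smul, EuclideanSpace.norm_single]
      simp only [norm_one, mul_one, Real.norm_eq_abs]
      rw [abs_of_pos (by linarith)]
      linarith
    have h2 := hTupper z' hz'mem
    have hz'1 : z' 1 = z 1 - ε/2 := by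
      rw [hz'def]
      simp [EuclideanSpace.single_apply]
    rw [hz'1] at h2
    linarith
  -- membership translation for degreeLT
  have hmem₁ : ∀ p : Polynomial ℝ, p.natDegree ≤ k → p ∈ Polynomial.degreeLT ℝ (k+1) := by
    intro p hp
    rw [Polynomial.mem_degreeLT]
    calc p.degree ≤ (p.natDegree : WithBot ℕ) := Polynomial.degree_le_natDegree
    _ < ((k+1 : ℕ) : WithBot ℕ) := by exact_mod_cast Nat.lt_succ_of_le hp
  have hdegLT : ∀ p : Polynomial ℝ, p ∈ Polynomial.degreeLT ℝ (k+1) → p.natDegree ≤ k := by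
    intro p hp
    rcases eq_or_ne p 0 with h | h
    · simp [h]
    · have h1 := Polynomial.mem_degreeLT.mp hp
      have h2 := (Polynomial.natDegree_lt_iff_degree_lt h).mpr h1
      omega
  haveI : FiniteDimensional ℝ (Polynomial.degreeLT ℝ (k+1)) :=
    Module.Finite.equiv (Polynomial.degreeLTEquiv ℝ (k+1)).symm
  -- bilinear identities for the edge pairing
  have hIadd : ∀ a b c : Polynomial ℝ,
      (∫ x in Icc (0:ℝ) 1, MvPolynomial.eval ![x, (0:ℝ)] L * (a + b).eval x * c.eval x)
        = (∫ x in Icc (0:ℝ) 1, MvPolynomial.eval ![x, (0:ℝ)] L * a.eval x * c.eval x)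
          + ∫ x in Icc (0:ℝ) 1, MvPolynomial.eval ![x, (0:ℝ)] L * b.eval x * c.eval x := by
    intro a b c
    have h : (fun x => MvPolynomial.eval ![x, (0:ℝ)] L * (a + b).eval x * c.eval x)
        = fun x => MvPolynomial.eval ![x, (0:ℝ)] L * a.eval x * c.eval x
            + MvPolynomial.eval ![x, (0:ℝ)] L * b.eval x * c.eval x := by
      funext x; rw [Polynomial.eval_add]; ring
    rw [h]
    exact integral_add (hint1 _ (((hwcont L).mul a.continuous).mul c.continuous))
      (hint1 _ (((hwcont L).mul b.continuous).mul c.continuous))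
  have hIsmul : ∀ (c : ℝ) (a b : Polynomial ℝ),
      (∫ x in Icc (0:ℝ) 1, MvPolynomial.eval ![x, (0:ℝ)] L * (c • a).eval x * b.eval x)
        = c * ∫ x in Icc (0:ℝ) 1, MvPolynomial.eval ![x, (0:ℝ)] L * a.eval x * b.eval x := by
    intro c a b
    have h : (fun x => MvPolynomial.eval ![x, (0:ℝ)] L * (c • a).eval x * b.eval x)
        = fun x => c * (MvPolynomial.eval ![x, (0:ℝ)] L * a.eval x * b.eval x) := by
      funext x; rw [Polynomial.eval_smul, smul_eq_mul]; ring
    rw [h, integral_const_mul]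
  have hIgadd : ∀ a b : Polynomial ℝ,
      (∫ x in Icc (0:ℝ) 1, g.eval x * (a + b).eval x)
        = (∫ x in Icc (0:ℝ) 1, g.eval x * a.eval x)
          + ∫ x in Icc (0:ℝ) 1, g.eval x * b.eval x := by
    intro a b
    have h : (fun x => g.eval x * (a + b).eval x)
        = fun x => g.eval x * a.eval x + g.eval x * b.eval x := by
      funext x; rw [Polynomial.eval_add]; ring
    rw [h]
    exact integral_add (hint1 _ (g.continuous.mul a.continuous))
      (hint1 _ (g.continuous.mul b.continuous))
  have hIgsmul : ∀ (c : ℝ) (a : Polynomial ℝ),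
      (∫ x in Icc (0:ℝ) 1, g.eval x * (c • a).eval x)
        = c * ∫ x in Icc (0:ℝ) 1, g.eval x * a.eval x := by
    intro c a
    have h : (fun x => g.eval x * (c • a).eval x)
        = fun x => c * (g.eval x * a.eval x) := by
      funext x; rw [Polynomial.eval_smul, smul_eq_mul]; ring
    rw [h, integral_const_mul]
  -- definiteness of the edge pairing
  have hdef₁ : ∀ q : Polynomial.degreeLT ℝ (k+1),
      (∫ x in Icc (0:ℝ) 1, MvPolynomial.eval ![x, (0:ℝ)] L *
        (q : Polynomial ℝ).eval x * (q : Polynomial ℝ).eval x) = 0 → q = 0 := by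
    intro q hq
    have hnn : ∀ x ∈ Icc (0:ℝ) 1, 0 ≤ MvPolynomial.eval ![x, (0:ℝ)] L *
        (q : Polynomial ℝ).eval x * (q : Polynomial ℝ).eval x := by
      intro x hx
      have h1 := hwnn x hx
      nlinarith [sq_nonneg ((q : Polynomial ℝ).eval x)]
    have hvan : ∀ x ∈ Ioo (0:ℝ) 1, (q : Polynomial ℝ).eval x = 0 := by
      intro x hx
      have h0 := aux_vanish measurableSet_Icc isCompact_Icc.measure_lt_top.ne
        (((hwcont L).mul (q : Polynomial ℝ).continuous).mul (q : Polynomial ℝ).continuous)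
        (hint1 _ (((hwcont L).mul (q : Polynomial ℝ).continuous).mul
          (q : Polynomial ℝ).continuous)) hnn hq (by rw [interior_Icc]; exact hx)
      have hwpos := hLe₀pos x hx
      rcases mul_eq_zero.mp h0 with h | h
      · rcases mul_eq_zero.mp h with h' | h'
        · exact absurd h' hwpos.ne'
        · exact h'
      · exact h
    have hq0 : (q : Polynomial ℝ) = 0 := by
      refine (q : Polynomial ℝ).eq_zero_of_infinite_isRoot ?_
      exact Set.Infinite.mono (fun x hx => hvan x hx) (Set.Ioo_infinite zero_lt_one)
    exact Subtype.ext hq0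
  -- Step 1: solve the edge system
  obtain ⟨qh, hqh, hqhu⟩ := aux_solve
    (fun q p : Polynomial.degreeLT ℝ (k+1) =>
      ∫ x in Icc (0:ℝ) 1, MvPolynomial.eval ![x, (0:ℝ)] L *
        (q : Polynomial ℝ).eval x * (p : Polynomial ℝ).eval x)
    (fun p : Polynomial.degreeLT ℝ (k+1) =>
      ∫ x in Icc (0:ℝ) 1, g.eval x * (p : Polynomial ℝ).eval x)
    (fun v₁ v₂ w => by simp only [Submodule.coe_add]; exact hIadd _ _ _)
    (fun c v w => by simp only [SetLike.val_smul]; exact hIsmul _ _ _)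
    (fun v w₁ w₂ => by
      simp only [Submodule.coe_add]
      have h : (fun x => MvPolynomial.eval ![x, (0:ℝ)] L * (v : Polynomial ℝ).eval x *
          ((w₁ : Polynomial ℝ) + (w₂ : Polynomial ℝ)).eval x)
          = fun x => MvPolynomial.eval ![x, (0:ℝ)] L * (v : Polynomial ℝ).eval x *
              (w₁ : Polynomial ℝ).eval x
            + MvPolynomial.eval ![x, (0:ℝ)] L * (v : Polynomial ℝ).eval x *
              (w₂ : Polynomial ℝ).eval x := by
        funext x; rw [Polynomial.eval_add]; ring
      rw [h]
      exact integral_add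
        (hint1 _ (((hwcont L).mul (v : Polynomial ℝ).continuous).mul
          (w₁ : Polynomial ℝ).continuous))
        (hint1 _ (((hwcont L).mul (v : Polynomial ℝ).continuous).mul
          (w₂ : Polynomial ℝ).continuous)))
    (fun c v w => by
      simp only [SetLike.val_smul]
      have h : (fun x => MvPolynomial.eval ![x, (0:ℝ)] L * (v : Polynomial ℝ).eval x *
          (c • (w : Polynomial ℝ)).eval x)
          = fun x => c * (MvPolynomial.eval ![x, (0:ℝ)] L * (v : Polynomial ℝ).eval x *
              (w : Polynomial ℝ).eval x) := by
        funext x; rw [Polynomial.eval_smul, smul_eq_mul]; ring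
      rw [h, integral_const_mul])
    (fun w₁ w₂ => by simp only [Submodule.coe_add]; exact hIgadd _ _)
    (fun c w => by simp only [SetLike.val_smul]; exact hIgsmul _ _)
    hdef₁
  -- the lifted edge polynomial
  set Qh : MvPolynomial (Fin 2) ℝ :=
    Polynomial.aeval (MvPolynomial.X 0 : MvPolynomial (Fin 2) ℝ) (qh : Polynomial ℝ) with hQhdef
  have hQhdeg : Qh.totalDegree ≤ k := (aux_td_lift _).trans (hdegLT _ qh.2)
  have hQheval : ∀ z : Fin 2 → ℝ, MvPolynomial.eval z Qh = (qh : Polynomial ℝ).eval (z 0) :=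
    fun z => aux_eval_lift _ z
  -- bilinear identities for the interior pairing
  have hJadd : ∀ A a b c : MvPolynomial (Fin 2) ℝ,
      (∫ z in T, MvPolynomial.eval z A * MvPolynomial.eval z (a + b) * MvPolynomial.eval z c)
        = (∫ z in T, MvPolynomial.eval z A * MvPolynomial.eval z a * MvPolynomial.eval z c)
          + ∫ z in T, MvPolynomial.eval z A * MvPolynomial.eval z b * MvPolynomial.eval z c := by
    intro A a b c
    have h : (fun z : EuclideanSpace ℝ (Fin 2) =>
        MvPolynomial.eval z A * MvPolynomial.eval z (a + b) * MvPolynomial.eval z c)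
        = fun z : EuclideanSpace ℝ (Fin 2) => MvPolynomial.eval z A * MvPolynomial.eval z a * MvPolynomial.eval z c
            + MvPolynomial.eval z A * MvPolynomial.eval z b * MvPolynomial.eval z c := by
      funext z; rw [map_add]; ring
    rw [h]
    exact integral_add (hTig _ (((hcont A).mul (hcont a)).mul (hcont c)))
      (hTig _ (((hcont A).mul (hcont b)).mul (hcont c)))
  have hJsmul : ∀ (c : ℝ) (A a b : MvPolynomial (Fin 2) ℝ),
      (∫ z in T, MvPolynomial.eval z A * MvPolynomial.eval z (c • a) * MvPolynomial.eval z b)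
        = c * ∫ z in T, MvPolynomial.eval z A * MvPolynomial.eval z a * MvPolynomial.eval z b := by
    intro c A a b
    have h : (fun z : EuclideanSpace ℝ (Fin 2) =>
        MvPolynomial.eval z A * MvPolynomial.eval z (c • a) * MvPolynomial.eval z b)
        = fun z : EuclideanSpace ℝ (Fin 2) => c * (MvPolynomial.eval z A * MvPolynomial.eval z a * MvPolynomial.eval z b) := by
      funext z
      rw [MvPolynomial.smul_eq_C_mul, map_mul, MvPolynomial.eval_C]
      ring
    rw [h]
    exact integral_const_mul _ _
  have hJadd' : ∀ A a b c : MvPolynomial (Fin 2) ℝ,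
      (∫ z in T, MvPolynomial.eval z A * MvPolynomial.eval z a * MvPolynomial.eval z (b + c))
        = (∫ z in T, MvPolynomial.eval z A * MvPolynomial.eval z a * MvPolynomial.eval z b)
          + ∫ z in T, MvPolynomial.eval z A * MvPolynomial.eval z a * MvPolynomial.eval z c := by
    intro A a b c
    have h : (fun z : EuclideanSpace ℝ (Fin 2) =>
        MvPolynomial.eval z A * MvPolynomial.eval z a * MvPolynomial.eval z (b + c))
        = fun z : EuclideanSpace ℝ (Fin 2) => MvPolynomial.eval z A * MvPolynomial.eval z a * MvPolynomial.eval z b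
            + MvPolynomial.eval z A * MvPolynomial.eval z a * MvPolynomial.eval z c := by
      funext z; rw [map_add]; ring
    rw [h]
    exact integral_add (hTig _ (((hcont A).mul (hcont a)).mul (hcont b)))
      (hTig _ (((hcont A).mul (hcont a)).mul (hcont c)))
  have hJsmul' : ∀ (c : ℝ) (A a b : MvPolynomial (Fin 2) ℝ),
      (∫ z in T, MvPolynomial.eval z A * MvPolynomial.eval z a * MvPolynomial.eval z (c • b))
        = c * ∫ z in T, MvPolynomial.eval z A * MvPolynomial.eval z a * MvPolynomial.eval z b := by
    intro c A a b
    have h : (fun z : EuclideanSpace ℝ (Fin 2) =>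
        MvPolynomial.eval z A * MvPolynomial.eval z a * MvPolynomial.eval z (c • b))
        = fun z : EuclideanSpace ℝ (Fin 2) => c * (MvPolynomial.eval z A * MvPolynomial.eval z a * MvPolynomial.eval z b) := by
      funext z
      rw [MvPolynomial.smul_eq_C_mul, map_mul, MvPolynomial.eval_C]
      ring
    rw [h]
    exact integral_const_mul _ _
  have hKadd : ∀ A a b : MvPolynomial (Fin 2) ℝ,
      (∫ z in T, MvPolynomial.eval z A * MvPolynomial.eval z (a + b))
        = (∫ z in T, MvPolynomial.eval z A * MvPolynomial.eval z a)
          + ∫ z in T, MvPolynomial.eval z A * MvPolynomial.eval z b := by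
    intro A a b
    have h : (fun z : EuclideanSpace ℝ (Fin 2) =>
        MvPolynomial.eval z A * MvPolynomial.eval z (a + b))
        = fun z : EuclideanSpace ℝ (Fin 2) => MvPolynomial.eval z A * MvPolynomial.eval z a
            + MvPolynomial.eval z A * MvPolynomial.eval z b := by
      funext z; rw [map_add]; ring
    rw [h]
    exact integral_add (hTig _ ((hcont A).mul (hcont a))) (hTig _ ((hcont A).mul (hcont b)))
  have hKsmul : ∀ (c : ℝ) (A a : MvPolynomial (Fin 2) ℝ),
      (∫ z in T, MvPolynomial.eval z A * MvPolynomial.eval z (c • a))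
        = c * ∫ z in T, MvPolynomial.eval z A * MvPolynomial.eval z a := by
    intro c A a
    have h : (fun z : EuclideanSpace ℝ (Fin 2) =>
        MvPolynomial.eval z A * MvPolynomial.eval z (c • a))
        = fun z : EuclideanSpace ℝ (Fin 2) => c * (MvPolynomial.eval z A * MvPolynomial.eval z a) := by
      funext z
      rw [MvPolynomial.smul_eq_C_mul, map_mul, MvPolynomial.eval_C]
      ring
    rw [h]
    exact integral_const_mul _ _
  -- definiteness of the interior pairing
  have hdef₂ : ∀ R : MvPolynomial.restrictTotalDegree (Fin 2) ℝ (k-1),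
      (∫ z in T, MvPolynomial.eval z (L * MvPolynomial.X 1) *
        MvPolynomial.eval z (R : MvPolynomial (Fin 2) ℝ) *
        MvPolynomial.eval z (R : MvPolynomial (Fin 2) ℝ)) = 0 → R = 0 := by
    intro R hR
    have hWnn : ∀ z ∈ T, 0 ≤ MvPolynomial.eval z (L * MvPolynomial.X 1) *
        MvPolynomial.eval z (R : MvPolynomial (Fin 2) ℝ) *
        MvPolynomial.eval z (R : MvPolynomial (Fin 2) ℝ) := by
      intro z hz
      have h1 : MvPolynomial.eval z (L * MvPolynomial.X 1)
          = MvPolynomial.eval z L * z 1 := by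
        rw [map_mul, MvPolynomial.eval_X]
      rw [h1]
      have h2 := hLnonneg z hz
      have h3 := hTupper z hz
      nlinarith [mul_nonneg (mul_nonneg h2 h3)
        (mul_self_nonneg (MvPolynomial.eval z (R : MvPolynomial (Fin 2) ℝ)))]
    have hvan : ∀ z ∈ interior T,
        MvPolynomial.eval z (R : MvPolynomial (Fin 2) ℝ) = 0 := by
      intro z hz
      have h0 := aux_vanish hTmeas hTfin
        (((hcont (L * MvPolynomial.X 1)).mul (hcont _)).mul (hcont _))
        (hTig _ (((hcont (L * MvPolynomial.X 1)).mul (hcont _)).mul (hcont _))) hWnn hR hz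
      have hW : 0 < MvPolynomial.eval z (L * MvPolynomial.X 1) := by
        rw [map_mul, MvPolynomial.eval_X]
        exact mul_pos (hLintpos z hz) (hy_pos z hz)
      rcases mul_eq_zero.mp h0 with h | h
      · rcases mul_eq_zero.mp h with h' | h'
        · exact absurd h' hW.ne'
        · exact h'
      · exact h
    exact Subtype.ext (aux_mv_eq_zero _ isOpen_interior hTint hvan)
  -- Step 2: solve the interior system
  obtain ⟨Rh, hRh, hRhu⟩ := aux_solve
    (fun R p : MvPolynomial.restrictTotalDegree (Fin 2) ℝ (k-1) =>
      ∫ z in T, MvPolynomial.eval z (L * MvPolynomial.X 1) *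
        MvPolynomial.eval z (R : MvPolynomial (Fin 2) ℝ) *
        MvPolynomial.eval z (p : MvPolynomial (Fin 2) ℝ))
    (fun p : MvPolynomial.restrictTotalDegree (Fin 2) ℝ (k-1) =>
      ∫ z in T, MvPolynomial.eval z (-(L * Qh)) *
        MvPolynomial.eval z (p : MvPolynomial (Fin 2) ℝ))
    (fun v₁ v₂ w => by simp only [Submodule.coe_add]; exact hJadd _ _ _ _)
    (fun c v w => by simp only [SetLike.val_smul]; exact hJsmul _ _ _ _)
    (fun v w₁ w₂ => by simp only [Submodule.coe_add]; exact hJadd' _ _ _ _)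
    (fun c v w => by simp only [SetLike.val_smul]; exact hJsmul' _ _ _ _)
    (fun w₁ w₂ => by simp only [Submodule.coe_add]; exact hKadd _ _ _)
    (fun c w => by simp only [SetLike.val_smul]; exact hKsmul _ _ _)
    hdef₂
  -- edge values of the candidate solution
  have hQ₁edge : ∀ x : ℝ, MvPolynomial.eval ![x, (0:ℝ)]
      (Qh + MvPolynomial.X 1 * (Rh : MvPolynomial (Fin 2) ℝ))
        = (qh : Polynomial ℝ).eval x := by
    intro x
    rw [map_add, map_mul, MvPolynomial.eval_X, hQheval]
    simp
  refine ⟨Qh + MvPolynomial.X 1 * (Rh : MvPolynomial (Fin 2) ℝ), ⟨?_, ?_, ?_⟩, ?_⟩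
  · -- total degree bound
    refine (MvPolynomial.totalDegree_add _ _).trans (max_le hQhdeg ?_)
    refine (MvPolynomial.totalDegree_mul _ _).trans ?_
    have h1 : (MvPolynomial.X 1 : MvPolynomial (Fin 2) ℝ).totalDegree = 1 :=
      MvPolynomial.totalDegree_X _
    have h2 : (Rh : MvPolynomial (Fin 2) ℝ).totalDegree ≤ k - 1 :=
      (MvPolynomial.mem_restrictTotalDegree _ _ _).mp Rh.2
    omega
  · -- condition (i)
    intro p hp
    have hkey := hqh ⟨p, hmem₁ p hp⟩
    simp only at hkey
    have hrw : (fun x => (g.eval x - MvPolynomial.eval ![x, 0] L *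
        MvPolynomial.eval ![x, 0] (Qh + MvPolynomial.X 1 * (Rh : MvPolynomial (Fin 2) ℝ)))
          * p.eval x)
        = fun x => g.eval x * p.eval x
          - MvPolynomial.eval ![x, (0:ℝ)] L * (qh : Polynomial ℝ).eval x * p.eval x := by
      funext x
      rw [hQ₁edge x]
      ring
    rw [hrw, integral_sub (hint1 (fun x => g.eval x * p.eval x) (g.continuous.mul p.continuous))
      (hint1 (fun x => MvPolynomial.eval ![x, (0:ℝ)] L * (qh : Polynomial ℝ).eval x * p.eval x)
        (((hwcont L).mul (qh : Polynomial ℝ).continuous).mul p.continuous))]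
    linarith [hkey]
  · -- condition (ii)
    intro p hp
    have hkey := hRh ⟨p, (MvPolynomial.mem_restrictTotalDegree _ _ _).mpr hp⟩
    simp only at hkey
    have hrw : (fun z : EuclideanSpace ℝ (Fin 2) => MvPolynomial.eval z L *
        MvPolynomial.eval z (Qh + MvPolynomial.X 1 * (Rh : MvPolynomial (Fin 2) ℝ)) *
        MvPolynomial.eval z p)
        = fun z : EuclideanSpace ℝ (Fin 2) => MvPolynomial.eval z L * MvPolynomial.eval z Qh * MvPolynomial.eval z p
          + MvPolynomial.eval z (L * MvPolynomial.X 1) *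
            MvPolynomial.eval z (Rh : MvPolynomial (Fin 2) ℝ) * MvPolynomial.eval z p := by
      funext z
      simp only [map_add, map_mul, MvPolynomial.eval_X]
      ring
    have h1 : (∫ z in T, MvPolynomial.eval z L *
        MvPolynomial.eval z (Qh + MvPolynomial.X 1 * (Rh : MvPolynomial (Fin 2) ℝ)) *
        MvPolynomial.eval z p)
        = (∫ z in T, MvPolynomial.eval z L * MvPolynomial.eval z Qh * MvPolynomial.eval z p)
          + ∫ z in T, MvPolynomial.eval z (L * MvPolynomial.X 1) *
            MvPolynomial.eval z (Rh : MvPolynomial (Fin 2) ℝ) * MvPolynomial.eval z p := by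
      rw [hrw]
      exact integral_add (hTig _ (((hcont L).mul (hcont Qh)).mul (hcont p)))
        (hTig _ (((hcont (L * MvPolynomial.X 1)).mul (hcont _)).mul (hcont p)))
    have hneg : (fun z : EuclideanSpace ℝ (Fin 2) =>
        MvPolynomial.eval z (-(L * Qh)) * MvPolynomial.eval z p)
        = fun z : EuclideanSpace ℝ (Fin 2) => -(MvPolynomial.eval z L * MvPolynomial.eval z Qh * MvPolynomial.eval z p) := by
      funext z; simp only [map_neg, map_mul]; ring
    have h2 : (∫ z in T, MvPolynomial.eval z (-(L * Qh)) * MvPolynomial.eval z p)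
        = -∫ z in T, MvPolynomial.eval z L * MvPolynomial.eval z Qh * MvPolynomial.eval z p := by
      rw [hneg]
      exact integral_neg _
    rw [h1, hkey, h2]
    exact add_neg_cancel _
  · -- uniqueness
    rintro Q' ⟨hd', hi', hii'⟩
    have hq'nd : (MvPolynomial.aeval ![Polynomial.X, (0 : Polynomial ℝ)] Q').natDegree ≤ k :=
      (aux_natDegree_tr Q').trans hd'
    set q' : Polynomial ℝ := MvPolynomial.aeval ![Polynomial.X, (0 : Polynomial ℝ)] Q'
      with hq'def
    have hclaim1 : ∀ w : Polynomial.degreeLT ℝ (k+1),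
        (∫ x in Icc (0:ℝ) 1, MvPolynomial.eval ![x, (0:ℝ)] L * q'.eval x *
          (w : Polynomial ℝ).eval x)
          = ∫ x in Icc (0:ℝ) 1, g.eval x * (w : Polynomial ℝ).eval x := by
      intro w
      have h0 := hi' (w : Polynomial ℝ) (hdegLT _ w.2)
      have hrw : (fun x => (g.eval x - MvPolynomial.eval ![x, 0] L *
          MvPolynomial.eval ![x, 0] Q') * (w : Polynomial ℝ).eval x)
          = fun x => g.eval x * (w : Polynomial ℝ).eval x
            - MvPolynomial.eval ![x, (0:ℝ)] L * q'.eval x * (w : Polynomial ℝ).eval x := by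
        funext x
        rw [hq'def, aux_eval_tr Q' x]
        ring
      rw [hrw, integral_sub (hint1 (fun x => g.eval x * (w : Polynomial ℝ).eval x)
          (g.continuous.mul (w : Polynomial ℝ).continuous))
        (hint1 (fun x => MvPolynomial.eval ![x, (0:ℝ)] L * q'.eval x * (w : Polynomial ℝ).eval x)
          (((hwcont L).mul q'.continuous).mul (w : Polynomial ℝ).continuous))] at h0
      linarith
    have hq'mem : q' ∈ Polynomial.degreeLT ℝ (k+1) := hmem₁ _ hq'nd
    have heq1 : (⟨q', hq'mem⟩ : Polynomial.degreeLT ℝ (k+1)) = qh :=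
      hqhu _ (fun w => hclaim1 w)
    have hq'val : q' = (qh : Polynomial ℝ) := by rw [← heq1]
    obtain ⟨R', hR'⟩ := aux_X1_dvd Q'
    have hlift : Polynomial.aeval (MvPolynomial.X 0 : MvPolynomial (Fin 2) ℝ) q'
        = MvPolynomial.aeval ![MvPolynomial.X 0, 0] Q' := by
      rw [hq'def]; exact aux_lift_tr Q'
    have hQ'dec : Q' = Qh + MvPolynomial.X 1 * R' := by
      calc Q' = MvPolynomial.X 1 * R' + MvPolynomial.aeval ![MvPolynomial.X 0, 0] Q' :=
            sub_eq_iff_eq_add.mp hR'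
      _ = MvPolynomial.X 1 * R' + Qh := by rw [← hlift, hq'val, ← hQhdef]
      _ = Qh + MvPolynomial.X 1 * R' := add_comm _ _
    have hdR' : R'.totalDegree ≤ k - 1 := by
      refine aux_td_shift (n := k) ?_
      rw [← hR']
      have hA : (MvPolynomial.aeval ![(MvPolynomial.X 0 : MvPolynomial (Fin 2) ℝ), 0] Q').totalDegree ≤ k := by
        rw [← hlift]
        exact (aux_td_lift q').trans hq'nd
      rw [sub_eq_add_neg]
      refine (MvPolynomial.totalDegree_add _ _).trans (max_le hd' ?_)
      rw [MvPolynomial.totalDegree_neg]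
      exact hA
    have hclaim2 : ∀ w : MvPolynomial.restrictTotalDegree (Fin 2) ℝ (k-1),
        (∫ z in T, MvPolynomial.eval z (L * MvPolynomial.X 1) * MvPolynomial.eval z R' *
          MvPolynomial.eval z (w : MvPolynomial (Fin 2) ℝ))
          = ∫ z in T, MvPolynomial.eval z (-(L * Qh)) *
            MvPolynomial.eval z (w : MvPolynomial (Fin 2) ℝ) := by
      intro w
      have h0 := hii' (w : MvPolynomial (Fin 2) ℝ)
        ((MvPolynomial.mem_restrictTotalDegree _ _ _).mp w.2)
      have hrw : (fun z : EuclideanSpace ℝ (Fin 2) => MvPolynomial.eval z L *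
          MvPolynomial.eval z Q' * MvPolynomial.eval z (w : MvPolynomial (Fin 2) ℝ))
          = fun z : EuclideanSpace ℝ (Fin 2) => MvPolynomial.eval z L * MvPolynomial.eval z Qh *
              MvPolynomial.eval z (w : MvPolynomial (Fin 2) ℝ)
            + MvPolynomial.eval z (L * MvPolynomial.X 1) * MvPolynomial.eval z R' *
              MvPolynomial.eval z (w : MvPolynomial (Fin 2) ℝ) := by
        funext z
        rw [hQ'dec]
        simp only [map_add, map_mul, MvPolynomial.eval_X]
        ring
      have h1 : (∫ z in T, MvPolynomial.eval z L * MvPolynomial.eval z Q' *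
          MvPolynomial.eval z (w : MvPolynomial (Fin 2) ℝ))
          = (∫ z in T, MvPolynomial.eval z L * MvPolynomial.eval z Qh *
              MvPolynomial.eval z (w : MvPolynomial (Fin 2) ℝ))
            + ∫ z in T, MvPolynomial.eval z (L * MvPolynomial.X 1) * MvPolynomial.eval z R' *
              MvPolynomial.eval z (w : MvPolynomial (Fin 2) ℝ) := by
        rw [hrw]
        exact integral_add (hTig _ (((hcont L).mul (hcont Qh)).mul (hcont _)))
          (hTig _ (((hcont (L * MvPolynomial.X 1)).mul (hcont R')).mul (hcont _)))
      rw [h1] at h0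
      have hneg : (fun z : EuclideanSpace ℝ (Fin 2) =>
          MvPolynomial.eval z (-(L * Qh)) * MvPolynomial.eval z (w : MvPolynomial (Fin 2) ℝ))
          = fun z : EuclideanSpace ℝ (Fin 2) => -(MvPolynomial.eval z L * MvPolynomial.eval z Qh *
              MvPolynomial.eval z (w : MvPolynomial (Fin 2) ℝ)) := by
        funext z; simp only [map_neg, map_mul]; ring
      have h2 : (∫ z in T, MvPolynomial.eval z (-(L * Qh)) *
          MvPolynomial.eval z (w : MvPolynomial (Fin 2) ℝ))
          = -∫ z in T, MvPolynomial.eval z L * MvPolynomial.eval z Qh *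
              MvPolynomial.eval z (w : MvPolynomial (Fin 2) ℝ) := by
        rw [hneg]
        exact integral_neg _
      rw [h2]
      linarith
    have hR'mem : R' ∈ MvPolynomial.restrictTotalDegree (Fin 2) ℝ (k-1) :=
      (MvPolynomial.mem_restrictTotalDegree _ _ _).mpr hdR'
    have heq2 : (⟨R', hR'mem⟩ : MvPolynomial.restrictTotalDegree (Fin 2) ℝ (k-1)) = Rh :=
      hRhu _ (fun w => hclaim2 w)
    have hR'val : R' = (Rh : MvPolynomial (Fin 2) ℝ) := by rw [← heq2]
    rw [hQ'dec, hR'val]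
end
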